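/- arXiv:1701.07805 — 4 statements merged into one kernel-verified Lean document; each statement's English description precedes it below -/
import Mathlib

section
/- (Lemma 2b) Under the hypotheses of the nonnegative bivariate decomposition, define C̄I*(S;X₁,X₂) := I(S;X₁X₂) − SĪ(S;X₁,X₂) − ŪI*(S;X₁\X₂) − ŪI*(S;X₂\X₁), where SĪ(S;X₁,X₂) := max_f SI(f(S);X₁,X₂) and ŪI*(S;Xᵢ\Xⱼ) := I(S;Xᵢ) − SĪ(S;X₁,X₂). Then C̄I*(S;X₁,X₂) = SĪ(S;X₁,X₂) − CoI(S;X₁,X₂) ≥ CI(S;X₁,X₂) ≥ 0. -/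
/- Common definitions: finite joint distributions, mutual information (in nats),
   conditional mutual information, pushforwards, information decompositions. -/

open Finset
open scoped Classical

namespace Paper

noncomputable section

variable {S T T' X X₁ X₂ Z A B : Type*}

/-- Marginal of the first variable of a joint distribution. -/
def m1 [Fintype X] (p : S → X → ℝ) (s : S) : ℝ := ∑ x, p s x

/-- Marginal of the second variable of a joint distribution. -/
def m2 [Fintype S] (p : S → X → ℝ) (x : X) : ℝ := ∑ s, p s x

/-- Mutual information I(S;X) (in nats) of a finite joint distribution. -/
def MI [Fintype S] [Fintype X] (p : S → X → ℝ) : ℝ :=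
  ∑ s, ∑ x, p s x * Real.log (p s x / (m1 p s * m2 p x))

/-- `p` is a probability mass function on the product of two finite alphabets. -/
def IsPMF [Fintype S] [Fintype X] (p : S → X → ℝ) : Prop :=
  (∀ s x, 0 ≤ p s x) ∧ ∑ s, ∑ x, p s x = 1

/-- `p` is a probability mass function on the product of three finite alphabets. -/
def IsPMF3 [Fintype S] [Fintype X₁] [Fintype X₂] (p : S → X₁ → X₂ → ℝ) : Prop :=
  (∀ s x₁ x₂, 0 ≤ p s x₁ x₂) ∧ ∑ s, ∑ x₁, ∑ x₂, p s x₁ x₂ = 1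

/-- Marginal joint distribution of (S,X₁). -/
def m12 [Fintype X₂] (p : S → X₁ → X₂ → ℝ) : S → X₁ → ℝ := fun s x₁ => ∑ x₂, p s x₁ x₂

/-- Marginal joint distribution of (S,X₂). -/
def m13 [Fintype X₁] (p : S → X₁ → X₂ → ℝ) : S → X₂ → ℝ := fun s x₂ => ∑ x₁, p s x₁ x₂

/-- Joint distribution of (S,(X₁,X₂)). -/
def joint (p : S → X₁ → X₂ → ℝ) : S → X₁ × X₂ → ℝ := fun s x => p s x.1 x.2

/-- I(S;X₁). -/
def MI1 [Fintype S] [Fintype X₁] [Fintype X₂] (p : S → X₁ → X₂ → ℝ) : ℝ := MI (m12 p)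

/-- I(S;X₂). -/
def MI2 [Fintype S] [Fintype X₁] [Fintype X₂] (p : S → X₁ → X₂ → ℝ) : ℝ := MI (m13 p)

/-- I(S;X₁X₂). -/
def MI12 [Fintype S] [Fintype X₁] [Fintype X₂] (p : S → X₁ → X₂ → ℝ) : ℝ := MI (joint p)

/-- Conditional mutual information I(S;X₁ ∣ X₂) (in nats). -/
def CMI [Fintype S] [Fintype X₁] [Fintype X₂] (p : S → X₁ → X₂ → ℝ) : ℝ :=
  ∑ s, ∑ x₁, ∑ x₂, p s x₁ x₂ *
    Real.log ((p s x₁ x₂ * (∑ s', ∑ x₁', p s' x₁' x₂)) /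
      ((∑ x₁', p s x₁' x₂) * (∑ s', p s' x₁ x₂)))

/-- Co-information CoI(S;X₁,X₂) = I(S;X₁) − I(S;X₁|X₂). -/
def CoI [Fintype S] [Fintype X₁] [Fintype X₂] (p : S → X₁ → X₂ → ℝ) : ℝ :=
  MI1 p - CMI p

/-- Swap the two predictor arguments. -/
def swap23 (p : S → X₁ → X₂ → ℝ) : S → X₂ → X₁ → ℝ := fun s x₂ x₁ => p s x₁ x₂

/-- Pushforward of the target variable S by a function f (joint of (f(S),X)). -/
def pushS [Fintype S] (f : S → T) (p : S → X → ℝ) : T → X → ℝ :=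
  fun t x => ∑ s, if f s = t then p s x else 0

/-- Pushforward of the target variable S by f, for triples (joint of (f(S),X₁,X₂)). -/
def pushS3 [Fintype S] (f : S → T) (p : S → X₁ → X₂ → ℝ) : T → X₁ → X₂ → ℝ :=
  fun t x₁ x₂ => ∑ s, if f s = t then p s x₁ x₂ else 0

/-- Joint distribution of the triple (f(S), S, X), from the joint of (S,X). -/
def tripleOf (f : S → T) (p : S → X → ℝ) : T → S → X → ℝ :=
  fun t s x => if f s = t then p s x else 0

/-- A and B are conditionally independent given Z (r is the joint of (Z,A,B));
    equivalently A — Z — B is a Markov chain. -/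
def CondIndep [Fintype A] [Fintype B] (r : Z → A → B → ℝ) : Prop :=
  ∀ z a b, r z a b * (∑ a', ∑ b', r z a' b') = (∑ b', r z a b') * (∑ a', r z a' b)

/-- The channel T → X₁ (given by the joint q1) is a garbling/degradation of the
    channel T → X₂ (given by the joint q2): q1 = λ ∘ q2 for a stochastic matrix λ. -/
def Garbling [Fintype X₁] [Fintype X₂] (q1 : T → X₁ → ℝ) (q2 : T → X₂ → ℝ) : Prop :=
  ∃ lam : X₂ → X₁ → ℝ, (∀ x₂ x₁, 0 ≤ lam x₂ x₁) ∧ (∀ x₂, ∑ x₁, lam x₂ x₁ = 1) ∧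
    ∀ t x₁, q1 t x₁ = ∑ x₂, lam x₂ x₁ * q2 t x₂

/-- Joint distribution of (COPY(X₁,X₂), X₁, X₂) built from the joint of (X₁,X₂). -/
def copyTriple (q : X₁ → X₂ → ℝ) : X₁ × X₂ → X₁ → X₂ → ℝ :=
  fun t x₁ x₂ => if t = (x₁, x₂) then q x₁ x₂ else 0

/-- The extractable information measure IM̄(S;X) := max over functions f on the
    range of S of IM(f(S);X).  (Only the partition of S induced by f matters,
    so functions with codomain S suffice and the supremum is attained.) -/
def extIM [Fintype S] [Fintype X] (IM : (S → X → ℝ) → ℝ) (p : S → X → ℝ) : ℝ :=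
  ⨆ f : S → S, IM (pushS f p)

/-- A nonnegative bivariate information decomposition (for fixed predictor
    alphabets X₁, X₂ and varying target alphabet T): shared, unique and
    complementary information, nonnegative and satisfying the Williams–Beer
    bivariate decomposition equations. -/
structure BID (X₁ X₂ : Type) [Fintype X₁] [Fintype X₂] where
  SI : ∀ (T : Type) [Fintype T], (T → X₁ → X₂ → ℝ) → ℝ
  UI1 : ∀ (T : Type) [Fintype T], (T → X₁ → X₂ → ℝ) → ℝ
  UI2 : ∀ (T : Type) [Fintype T], (T → X₁ → X₂ → ℝ) → ℝ
  CI : ∀ (T : Type) [Fintype T], (T → X₁ → X₂ → ℝ) → ℝ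
  SI_nonneg : ∀ (T : Type) [Fintype T] (p : T → X₁ → X₂ → ℝ), IsPMF3 p → 0 ≤ SI T p
  UI1_nonneg : ∀ (T : Type) [Fintype T] (p : T → X₁ → X₂ → ℝ), IsPMF3 p → 0 ≤ UI1 T p
  UI2_nonneg : ∀ (T : Type) [Fintype T] (p : T → X₁ → X₂ → ℝ), IsPMF3 p → 0 ≤ UI2 T p
  CI_nonneg : ∀ (T : Type) [Fintype T] (p : T → X₁ → X₂ → ℝ), IsPMF3 p → 0 ≤ CI T p
  eq_total : ∀ (T : Type) [Fintype T] (p : T → X₁ → X₂ → ℝ), IsPMF3 p →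
    MI12 p = SI T p + CI T p + UI1 T p + UI2 T p
  eq_one : ∀ (T : Type) [Fintype T] (p : T → X₁ → X₂ → ℝ), IsPMF3 p →
    MI1 p = SI T p + UI1 T p
  eq_two : ∀ (T : Type) [Fintype T] (p : T → X₁ → X₂ → ℝ), IsPMF3 p →
    MI2 p = SI T p + UI2 T p

/-- Extractable shared information SĪ(S;X₁,X₂) := max_f SI(f(S);X₁,X₂). -/
def SIbar {X₁ X₂ : Type} [Fintype X₁] [Fintype X₂] (D : BID X₁ X₂)
    {T : Type} [Fintype T] (p : T → X₁ → X₂ → ℝ) : ℝ :=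
  ⨆ f : T → T, D.SI T (pushS3 f p)

/-- Pushforward of the predictors (X₁,...,X_k) ↦ (f₁(X₁),...,f_k(X_k)). -/
def pushPred {ι : Type*} [Fintype ι] [DecidableEq ι] {X : ι → Type*} [∀ i, Fintype (X i)]
    [Fintype S] (f : ∀ i, X i → X i) (p : S → (∀ i, X i) → ℝ) : S → (∀ i, X i) → ℝ :=
  fun s y => ∑ x, if (fun i => f i (x i)) = y then p s x else 0

/-- Marginal joint distribution of (S, X_i) for a family of predictors. -/
def margFam {ι : Type*} [Fintype ι] [DecidableEq ι] (X : ι → Type*) [∀ i, Fintype (X i)]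
    [Fintype S] (p : S → (∀ i, X i) → ℝ) (i : ι) (s : S) (y : X i) : ℝ :=
  ∑ x : ∀ j, X j, if x i = y then p s x else 0

/-- Specific information of s provided by X_i:
    ∑_{x_i} P(x_i|s) log (P(s|x_i)/P(s)). -/
def specInfo {ι : Type*} [Fintype ι] [DecidableEq ι] (X : ι → Type*) [∀ i, Fintype (X i)]
    [Fintype S] (p : S → (∀ i, X i) → ℝ) (i : ι) (s : S) : ℝ :=
  ∑ y : X i, (margFam X p i s y / m1 p s) *
    Real.log ((margFam X p i s y / (∑ s', margFam X p i s' y)) / m1 p s)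

/-- Williams and Beer's measure I_min(S;X₁,...,X_k). -/
def Imin {ι : Type*} [Fintype ι] [DecidableEq ι] [Nonempty ι] (X : ι → Type*)
    [∀ i, Fintype (X i)] [Fintype S] (p : S → (∀ i, X i) → ℝ) : ℝ :=
  ∑ s, m1 p s * ⨅ i, specInfo X p i s

/-- The counterexample distribution on {0,1,2} × {0,1} × {0,1}:
    P(0,0,0)=1/4, P(1,0,1)=1/4, P(0,1,0)=1/8, P(1,1,0)=1/8, P(2,1,1)=1/4. -/
def cex : Fin 3 → Bool → Bool → ℝ := fun s x₁ x₂ =>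
  if s = 0 ∧ x₁ = false ∧ x₂ = false then 1/4
  else if s = 1 ∧ x₁ = false ∧ x₂ = true then 1/4
  else if s = 0 ∧ x₁ = true ∧ x₂ = false then 1/8
  else if s = 1 ∧ x₁ = true ∧ x₂ = false then 1/8
  else if s = 2 ∧ x₁ = true ∧ x₂ = true then 1/4
  else 0

/-- The function f with f(0)=f(1)=0, f(2)=2 on Fin 3 (the partition {0,1},{2}). -/
def fstar : Fin 3 → Fin 3 := fun s => if s = 2 then 2 else 0


private lemma le_sum_of_nonneg' {α : Type*} [Fintype α] {f : α → ℝ}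
    (h : ∀ a, 0 ≤ f a) (a : α) : f a ≤ ∑ a', f a' :=
  Finset.single_le_sum (fun i _ => h i) (Finset.mem_univ a)

private lemma le_sum2' {α β : Type*} [Fintype α] [Fintype β] {f : α → β → ℝ}
    (h : ∀ a b, 0 ≤ f a b) (a : α) (b : β) : f a b ≤ ∑ a', ∑ b', f a' b' :=
  le_trans (le_sum_of_nonneg' (h a) b)
    (le_sum_of_nonneg' (fun a' => Finset.sum_nonneg fun b' _ => h a' b') a)

private lemma chain_rule {X₁ X₂ T : Type} [Fintype X₁] [Fintype X₂] [Fintype T]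
    (p : T → X₁ → X₂ → ℝ) (hp : IsPMF3 p) :
    CMI p = MI12 p - MI2 p := by
  obtain ⟨hnn, -⟩ := hp
  have key : ∀ s x₁ x₂,
      p s x₁ x₂ * Real.log ((p s x₁ x₂ * (∑ s', ∑ x₁', p s' x₁' x₂)) /
        ((∑ x₁', p s x₁' x₂) * (∑ s', p s' x₁ x₂)))
      = p s x₁ x₂ * Real.log (p s x₁ x₂ /
            ((∑ x₁', ∑ x₂', p s x₁' x₂') * (∑ s', p s' x₁ x₂)))
        - p s x₁ x₂ * Real.log ((∑ x₁', p s x₁' x₂) /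
            ((∑ x₁', ∑ x₂', p s x₁' x₂') * (∑ s', ∑ x₁', p s' x₁' x₂))) := by
    intro s x₁ x₂
    rcases eq_or_lt_of_le (hnn s x₁ x₂) with h0 | hpos
    · simp [← h0]
    · have hq2 : 0 < ∑ s', ∑ x₁', p s' x₁' x₂ :=
        lt_of_lt_of_le hpos (le_sum2' (fun a b => hnn a b x₂) s x₁)
      have hr : 0 < ∑ x₁', p s x₁' x₂ :=
        lt_of_lt_of_le hpos (le_sum_of_nonneg' (fun a => hnn s a x₂) x₁)
      have hw : 0 < ∑ s', p s' x₁ x₂ :=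
        lt_of_lt_of_le hpos (le_sum_of_nonneg' (fun a => hnn a x₁ x₂) s)
      have hps : 0 < ∑ x₁', ∑ x₂', p s x₁' x₂' :=
        lt_of_lt_of_le hpos (le_sum2' (hnn s) x₁ x₂)
      rw [Real.log_div (mul_pos hpos hq2).ne' (mul_pos hr hw).ne',
          Real.log_div hpos.ne' (mul_pos hps hw).ne',
          Real.log_div hr.ne' (mul_pos hps hq2).ne',
          Real.log_mul hpos.ne' hq2.ne', Real.log_mul hr.ne' hw.ne',
          Real.log_mul hps.ne' hw.ne', Real.log_mul hps.ne' hq2.ne']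
      ring
  have hMI12 : MI12 p = ∑ s, ∑ x₁, ∑ x₂, p s x₁ x₂ * Real.log (p s x₁ x₂ /
      ((∑ x₁', ∑ x₂', p s x₁' x₂') * (∑ s', p s' x₁ x₂))) := by
    simp only [MI12, MI, joint, m1, m2, Fintype.sum_prod_type]
  have hMI2 : MI2 p = ∑ s, ∑ x₁, ∑ x₂, p s x₁ x₂ * Real.log ((∑ x₁', p s x₁' x₂) /
      ((∑ x₁', ∑ x₂', p s x₁' x₂') * (∑ s', ∑ x₁', p s' x₁' x₂))) := by
    simp only [MI2, MI, m13, m1, m2]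
    refine Finset.sum_congr rfl fun s _ => ?_
    conv_lhs => rw [Finset.sum_comm]
    conv_rhs => rw [Finset.sum_comm]
    exact Finset.sum_congr rfl fun x₂ _ => Finset.sum_mul _ _ _
  rw [hMI12, hMI2, CMI, ← Finset.sum_sub_distrib]
  refine Finset.sum_congr rfl fun s _ => ?_
  rw [← Finset.sum_sub_distrib]
  refine Finset.sum_congr rfl fun x₁ _ => ?_
  rw [← Finset.sum_sub_distrib]
  exact Finset.sum_congr rfl fun x₂ _ => key s x₁ x₂

/-- Lemma 2b: C̄I*(S;X₁,X₂) = SĪ(S;X₁,X₂) − CoI(S;X₁,X₂) ≥ CI(S;X₁,X₂) ≥ 0. -/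
theorem CIbar_star {X₁ X₂ : Type} [Fintype X₁] [Fintype X₂]
    (D : BID X₁ X₂) {T : Type} [Fintype T]
    (p : T → X₁ → X₂ → ℝ) (hp : IsPMF3 p) :
    MI12 p - SIbar D p - (MI1 p - SIbar D p) - (MI2 p - SIbar D p)
      = SIbar D p - CoI p
    ∧ D.CI T p ≤ SIbar D p - CoI p
    ∧ 0 ≤ D.CI T p := by
  have hchain := chain_rule p hp
  have hCoI : CoI p = MI1 p - (MI12 p - MI2 p) := by rw [CoI, hchain]
  have hid : pushS3 (id : T → T) p = p := by
    funext t x₁ x₂; simp [pushS3]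
  have hSI : D.SI T p ≤ SIbar D p := by
    have := le_ciSup (f := fun f : T → T => D.SI T (pushS3 f p))
      ((Set.finite_range _).bddAbove) id
    rwa [hid] at this
  have e1 := D.eq_total T p hp
  have e2 := D.eq_one T p hp
  have e3 := D.eq_two T p hp
  refine ⟨by linarith, by linarith, D.CI_nonneg T p hp⟩

end
end Paper
end

section
/- (Lemma 2c) Under the hypotheses of the nonnegative bivariate decomposition, if f* attains the maximum in SĪ(S;X₁,X₂) = max_f SI(f(S);X₁,X₂), then UI(f*(S);X₁\X₂) ≤ ŪI*(S;X₁\X₂) ≤ UI(S;X₁\X₂), where ŪI*(S;X₁\X₂) := I(S;X₁) − SĪ(S;X₁,X₂). -/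
/- Common definitions: finite joint distributions, mutual information (in nats),
   conditional mutual information, pushforwards, information decompositions. -/

open Finset
open scoped Classical

namespace Paper

noncomputable section

variable {S T T' X X₁ X₂ Z A B : Type*}

section DPIaux
variable {S T X X₁ X₂ : Type*}

lemma key_ineq (a b : ℝ) (ha : 0 ≤ a) (hb : 0 ≤ b) (h : 0 < a → 0 < b) :
    a - b ≤ a * Real.log (a / b) := by
  rcases eq_or_lt_of_le ha with h0 | h0
  · simp [← h0]; linarith
  · have hb' := h h0
    have h1 : Real.log (b / a) ≤ b / a - 1 := Real.log_le_sub_one_of_pos (by positivity)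
    have h2 : Real.log (a / b) = -Real.log (b / a) := by
      rw [Real.log_div (ne_of_gt h0) (ne_of_gt hb'), Real.log_div (ne_of_gt hb') (ne_of_gt h0)]
      ring
    have h3 : 1 - b / a ≤ Real.log (a / b) := by rw [h2]; linarith
    have := mul_le_mul_of_nonneg_left h3 (le_of_lt h0)
    have ha' : a * (1 - b / a) = a - b := by field_simp
    linarith [ha' ▸ this]

lemma MI_pushS_le [Fintype S] [Fintype T] [Fintype X] (f : S → T) (q : S → X → ℝ)
    (hq : IsPMF q) : MI (pushS f q) ≤ MI q := by
  obtain ⟨hq0, hq1⟩ := hq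
  have hq'0 : ∀ t x, (0:ℝ) ≤ pushS f q t x := fun t x =>
    Finset.sum_nonneg fun s _ => by split <;> simp [hq0 s x]
  have hm1q0 : ∀ s, 0 ≤ m1 q s := fun s => Finset.sum_nonneg fun x _ => hq0 s x
  have hm2 : ∀ x, m2 (pushS f q) x = m2 q x := by
    intro x
    unfold m2 pushS
    rw [Finset.sum_comm]
    simp
  have hle1 : ∀ s x, q s x ≤ m1 q s := fun s x =>
    Finset.single_le_sum (fun x _ => hq0 s x) (mem_univ x)
  have hle2 : ∀ s x, q s x ≤ m2 q x := fun s x =>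
    Finset.single_le_sum (fun s _ => hq0 s x) (mem_univ s)
  have hle3 : ∀ s x, q s x ≤ pushS f q (f s) x := fun s x => by
    have := Finset.single_le_sum (f := fun s' => if f s' = f s then q s' x else 0)
      (fun s' _ => by by_cases h : f s' = f s <;> simp [h, hq0 s' x]) (mem_univ s)
    simpa [pushS] using this
  have hle4 : ∀ t x, pushS f q t x ≤ m1 (pushS f q) t := fun t x =>
    Finset.single_le_sum (fun x _ => hq'0 t x) (mem_univ x)
  -- rewrite MI of pushforward
  have hrw : MI (pushS f q) =
      ∑ s, ∑ x, q s x * Real.log (pushS f q (f s) x / (m1 (pushS f q) (f s) * m2 q x)) := by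
    unfold MI
    simp only [hm2]
    have : ∀ t x, pushS f q t x *
        Real.log (pushS f q t x / (m1 (pushS f q) t * m2 q x)) =
        ∑ s, if f s = t then q s x * Real.log (pushS f q t x / (m1 (pushS f q) t * m2 q x)) else 0 := by
      intro t x
      rw [pushS, Finset.sum_mul]
      congr 1; funext s; split <;> simp
    calc ∑ t, ∑ x, pushS f q t x * Real.log (pushS f q t x / (m1 (pushS f q) t * m2 q x))
        = ∑ t, ∑ x, ∑ s, if f s = t then
            q s x * Real.log (pushS f q t x / (m1 (pushS f q) t * m2 q x)) else 0 := by
          simp only [this]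
      _ = ∑ t, ∑ s, ∑ x, if f s = t then
            q s x * Real.log (pushS f q t x / (m1 (pushS f q) t * m2 q x)) else 0 :=
          Finset.sum_congr rfl (fun t _ => Finset.sum_comm)
      _ = ∑ s, ∑ t, ∑ x, if f s = t then
            q s x * Real.log (pushS f q t x / (m1 (pushS f q) t * m2 q x)) else 0 :=
          Finset.sum_comm
      _ = ∑ s, ∑ x, ∑ t, if f s = t then
            q s x * Real.log (pushS f q t x / (m1 (pushS f q) t * m2 q x)) else 0 :=
          Finset.sum_congr rfl (fun s _ => Finset.sum_comm)
      _ = _ := by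
          congr 1; funext s; congr 1; funext x
          rw [Finset.sum_ite_eq]
          simp
  set b : S → X → ℝ := fun s x => if m1 (pushS f q) (f s) = 0 then 0
    else m1 q s * pushS f q (f s) x / m1 (pushS f q) (f s) with hb
  have hm1'0 : ∀ t, 0 ≤ m1 (pushS f q) t := fun t =>
    Finset.sum_nonneg fun x _ => hq'0 t x
  have hb0 : ∀ s x, 0 ≤ b s x := by
    intro s x; rw [hb]; dsimp only; split
    · exact le_rfl
    · exact div_nonneg (mul_nonneg (hm1q0 s) (hq'0 _ x)) (hm1'0 _)
  -- per-term inequality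
  have hterm : ∀ s x, q s x - b s x ≤
      q s x * Real.log (q s x / (m1 q s * m2 q x)) -
      q s x * Real.log (pushS f q (f s) x / (m1 (pushS f q) (f s) * m2 q x)) := by
    intro s x
    rcases eq_or_lt_of_le (hq0 s x) with h0 | h0
    · simp [← h0, hb0 s x]
    · have hm1 : 0 < m1 q s := lt_of_lt_of_le h0 (hle1 s x)
      have hm2x : 0 < m2 q x := lt_of_lt_of_le h0 (hle2 s x)
      have hq' : 0 < pushS f q (f s) x := lt_of_lt_of_le h0 (hle3 s x)
      have hm1' : 0 < m1 (pushS f q) (f s) := lt_of_lt_of_le hq' (hle4 (f s) x)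
      have hbv : b s x = m1 q s * pushS f q (f s) x / m1 (pushS f q) (f s) := by
        rw [hb]; dsimp only; rw [if_neg (ne_of_gt hm1')]
      have hbpos : 0 < b s x := by rw [hbv]; positivity
      have hkey := key_ineq (q s x) (b s x) (le_of_lt h0) (le_of_lt hbpos) (fun _ => hbpos)
      have hlogeq : Real.log (q s x / b s x) =
          Real.log (q s x / (m1 q s * m2 q x)) -
          Real.log (pushS f q (f s) x / (m1 (pushS f q) (f s) * m2 q x)) := by
        rw [hbv]
        rw [Real.log_div (ne_of_gt h0) (by positivity),
            Real.log_div (ne_of_gt h0) (by positivity),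
            Real.log_div (ne_of_gt hq') (by positivity),
            Real.log_mul (ne_of_gt hm1) (ne_of_gt hm2x),
            Real.log_mul (ne_of_gt hm1') (ne_of_gt hm2x),
            Real.log_div (by positivity) (ne_of_gt hm1'),
            Real.log_mul (ne_of_gt hm1) (ne_of_gt hq')]
        ring
      calc q s x - b s x ≤ q s x * Real.log (q s x / b s x) := hkey
        _ = _ := by rw [hlogeq]; ring
  -- sum of b bounded by 1
  have hbsum : ∑ s, ∑ x, b s x ≤ 1 := by
    have hrow : ∀ s, ∑ x, b s x ≤ m1 q s := by
      intro s
      by_cases h : m1 (pushS f q) (f s) = 0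
      · simp only [hb, h, if_true]
        simp [hm1q0 s]
      · have : ∑ x, b s x = m1 q s := by
          simp only [hb, h, if_false]
          rw [← Finset.sum_div, ← Finset.mul_sum]
          have : ∑ x, pushS f q (f s) x = m1 (pushS f q) (f s) := rfl
          rw [this, mul_div_assoc, div_self h, mul_one]
        rw [this]
    calc ∑ s, ∑ x, b s x ≤ ∑ s, m1 q s := Finset.sum_le_sum (fun s _ => hrow s)
      _ = 1 := by simpa [m1] using hq1
  have hqsum : ∑ s, ∑ x, q s x = 1 := hq1
  have hdiff : 0 ≤ MI q - MI (pushS f q) := by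
    rw [hrw]
    unfold MI
    rw [← Finset.sum_sub_distrib]
    simp only [← Finset.sum_sub_distrib]
    have : ∑ s, ∑ x, (q s x - b s x) ≤ ∑ s, ∑ x,
        (q s x * Real.log (q s x / (m1 q s * m2 q x)) -
         q s x * Real.log (pushS f q (f s) x / (m1 (pushS f q) (f s) * m2 q x))) :=
      Finset.sum_le_sum (fun s _ => Finset.sum_le_sum (fun x _ => hterm s x))
    have h2 : ∑ s, ∑ x, (q s x - b s x) = 1 - ∑ s, ∑ x, b s x := by
      simp only [Finset.sum_sub_distrib]
      rw [hqsum]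
    linarith
  linarith

lemma isPMF3_pushS3 [Fintype S] [Fintype T] [Fintype X₁] [Fintype X₂]
    (f : S → T) (p : S → X₁ → X₂ → ℝ) (hp : IsPMF3 p) : IsPMF3 (pushS3 f p) := by
  obtain ⟨h0, h1⟩ := hp
  constructor
  · intro t x₁ x₂
    exact Finset.sum_nonneg fun s _ => by
      by_cases h : f s = t <;> simp [h, h0 s x₁ x₂]
  · calc ∑ t, ∑ x₁, ∑ x₂, pushS3 f p t x₁ x₂
        = ∑ t, ∑ s, (if f s = t then ∑ x₁, ∑ x₂, p s x₁ x₂ else 0) := by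
          refine Finset.sum_congr rfl fun t _ => ?_
          simp only [pushS3]
          calc ∑ x₁, ∑ x₂, ∑ s, (if f s = t then p s x₁ x₂ else 0)
              = ∑ x₁, ∑ s, ∑ x₂, (if f s = t then p s x₁ x₂ else 0) :=
                Finset.sum_congr rfl (fun x₁ _ => Finset.sum_comm)
            _ = ∑ s, ∑ x₁, ∑ x₂, (if f s = t then p s x₁ x₂ else 0) :=
                Finset.sum_comm
            _ = ∑ s, (if f s = t then ∑ x₁, ∑ x₂, p s x₁ x₂ else 0) := by
                refine Finset.sum_congr rfl fun s _ => ?_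
                by_cases h : f s = t <;> simp [h]
      _ = ∑ s, ∑ x₁, ∑ x₂, p s x₁ x₂ := by
          rw [Finset.sum_comm]; simp
      _ = 1 := h1

lemma pushS3_id [Fintype T] (p : T → X₁ → X₂ → ℝ) :
    pushS3 (id : T → T) p = p := by
  funext t x₁ x₂
  simp [pushS3]

lemma m12_pushS3 [Fintype S] [Fintype T] [Fintype X₂] (f : S → T) (p : S → X₁ → X₂ → ℝ) :
    m12 (pushS3 f p) = pushS f (m12 p) := by
  funext t x₁
  unfold m12 pushS pushS3
  rw [Finset.sum_comm]
  refine Finset.sum_congr rfl fun s _ => ?_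
  by_cases h : f s = t <;> simp [h]

lemma isPMF_m12 [Fintype S] [Fintype X₁] [Fintype X₂] (p : S → X₁ → X₂ → ℝ)
    (hp : IsPMF3 p) : IsPMF (m12 p) := by
  obtain ⟨h0, h1⟩ := hp
  exact ⟨fun s x₁ => Finset.sum_nonneg fun x₂ _ => h0 s x₁ x₂, h1⟩

lemma MI1_pushS3_le [Fintype S] [Fintype T] [Fintype X₁] [Fintype X₂]
    (f : S → T) (p : S → X₁ → X₂ → ℝ) (hp : IsPMF3 p) :
    MI1 (pushS3 f p) ≤ MI1 p := by
  unfold MI1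
  rw [m12_pushS3]
  exact MI_pushS_le f (m12 p) (isPMF_m12 p hp)

end DPIaux

/-- Lemma 2c: if f* attains the maximum defining SĪ(S;X₁,X₂), then
UI(f*(S);X₁\X₂) ≤ ŪI*(S;X₁\X₂) ≤ UI(S;X₁\X₂). -/
theorem UIbar_star_bounds {X₁ X₂ : Type} [Fintype X₁] [Fintype X₂]
    (D : BID X₁ X₂) {T : Type} [Fintype T]
    (p : T → X₁ → X₂ → ℝ) (hp : IsPMF3 p)
    (f : T → T) (hf : D.SI T (pushS3 f p) = SIbar D p) :
    D.UI1 T (pushS3 f p) ≤ MI1 p - SIbar D p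
    ∧ MI1 p - SIbar D p ≤ D.UI1 T p := by
  have hpf : IsPMF3 (pushS3 f p) := isPMF3_pushS3 f p hp
  have h1 : MI1 (pushS3 f p) = D.SI T (pushS3 f p) + D.UI1 T (pushS3 f p) :=
    D.eq_one T (pushS3 f p) hpf
  have h2 : MI1 p = D.SI T p + D.UI1 T p := D.eq_one T p hp
  have hdpi : MI1 (pushS3 f p) ≤ MI1 p := MI1_pushS3_le f p hp
  -- SIbar is a sup over a bounded set, attained anyway, and SI p ≤ SIbar
  have hbdd : BddAbove (Set.range fun g : T → T => D.SI T (pushS3 g p)) := by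
    refine ⟨MI1 p, ?_⟩
    rintro _ ⟨g, rfl⟩
    have hpg : IsPMF3 (pushS3 g p) := isPMF3_pushS3 g p hp
    have := D.eq_one T (pushS3 g p) hpg
    have hui := D.UI1_nonneg T (pushS3 g p) hpg
    have := MI1_pushS3_le g p hp
    dsimp only
    linarith
  have hSIp : D.SI T p ≤ SIbar D p := by
    have : D.SI T (pushS3 (id : T → T) p) ≤ SIbar D p := le_ciSup hbdd id
    rwa [pushS3_id] at this
  constructor
  · -- UI1(f*) = MI1(push) - SIbar ≤ MI1 p - SIbar
    rw [← hf]
    linarith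
  · linarith

end
end Paper
end

section
/- (Corollary) There is no nonnegative bivariate information decomposition (SI, UI, CI) in which UI satisfies the Blackwell property and SI satisfies left monotonicity. -/
/- Common definitions: finite joint distributions, mutual information (in nats),
   conditional mutual information, pushforwards, information decompositions. -/

open Finset
open scoped Classical

namespace Paper

noncomputable section

variable {S T T' X X₁ X₂ Z A B : Type*}

lemma cex_pmf : IsPMF3 cex := by
  constructor
  · intro s x₁ x₂
    simp only [cex]
    split_ifs <;> norm_num [Fin.ext_iff]
  · show (∑ s : Fin 3, ∑ x₁ : Bool, ∑ x₂ : Bool, cex s x₁ x₂) = 1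
    rw [Fin.sum_univ_three]
    simp [cex, Fintype.sum_bool]
    norm_num [Fin.ext_iff]

def qq : Fin 3 → Bool → Bool → ℝ := pushS3 fstar cex

lemma qq_eval : ∀ t x₁ x₂, qq t x₁ x₂ = cex 0 x₁ x₂ * (if t = 0 then 1 else 0)
    + cex 1 x₁ x₂ * (if t = 0 then 1 else 0) + cex 2 x₁ x₂ * (if t = 2 then 1 else 0) := by
  intro t x₁ x₂
  simp only [qq, pushS3]
  rw [Fin.sum_univ_three]
  fin_cases t <;> simp [fstar, Fin.ext_iff] <;> ring

lemma qq_pmf : IsPMF3 qq := by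
  constructor
  · intro s x₁ x₂
    simp only [qq, pushS3]
    apply Finset.sum_nonneg
    intro i _
    split_ifs with h
    · exact cex_pmf.1 i x₁ x₂
    · exact le_refl _
  · show (∑ s : Fin 3, ∑ x₁ : Bool, ∑ x₂ : Bool, qq s x₁ x₂) = 1
    simp only [qq_eval]
    rw [Fin.sum_univ_three]
    simp [cex, Fintype.sum_bool]
    norm_num [Fin.ext_iff]

lemma m12_qq : ∀ t x₁, m12 qq t x₁ =
    if t = 0 then (if x₁ then 1/4 else 1/2) else if t = 2 then (if x₁ then 1/4 else 0) else 0 := by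
  intro t x₁
  show (∑ x₂ : Bool, qq t x₁ x₂) = _
  rw [Fintype.sum_bool]
  simp only [qq_eval, cex]
  fin_cases t <;> cases x₁ <;> norm_num [Fin.ext_iff]

lemma m13_qq : ∀ t x₂, m13 qq t x₂ =
    if t = 0 then (if x₂ then 1/4 else 1/2) else if t = 2 then (if x₂ then 1/4 else 0) else 0 := by
  intro t x₂
  show (∑ x₁ : Bool, qq t x₁ x₂) = _
  rw [Fintype.sum_bool]
  simp only [qq_eval, cex]
  fin_cases t <;> cases x₂ <;> norm_num [Fin.ext_iff]

lemma garb_q : Garbling (m12 qq) (m13 qq) := by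
  refine ⟨fun x₂ x₁ => if x₁ = x₂ then 1 else 0, ?_, ?_, ?_⟩
  · intro x₂ x₁; dsimp only; split_ifs <;> norm_num [Fin.ext_iff]
  · intro x₂; rw [Fintype.sum_bool]; cases x₂ <;> simp
  · intro t x₁
    rw [Fintype.sum_bool, m12_qq, m13_qq, m13_qq]
    cases x₁ <;> simp

lemma m12_cex : ∀ s x₁, m12 cex s x₁ =
    if s = 2 then (if x₁ then 1/4 else 0) else (if x₁ then 1/8 else 1/4) := by
  intro s x₁
  show (∑ x₂ : Bool, cex s x₁ x₂) = _
  rw [Fintype.sum_bool]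
  simp only [cex]
  fin_cases s <;> cases x₁ <;> norm_num [Fin.ext_iff]

lemma m13_cex : ∀ s x₂, m13 cex s x₂ =
    if s = 0 then (if x₂ then 0 else 3/8) else if s = 1 then (if x₂ then 1/4 else 1/8)
      else (if x₂ then 1/4 else 0) := by
  intro s x₂
  show (∑ x₁ : Bool, cex s x₁ x₂) = _
  rw [Fintype.sum_bool]
  simp only [cex]
  fin_cases s <;> cases x₂ <;> norm_num [Fin.ext_iff]

lemma not_garb : ¬ Garbling (m12 cex) (m13 cex) := by
  rintro ⟨lam, hn, hs, heq⟩
  have h1 := heq 0 true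
  have h2 := heq 2 false
  have h3 := heq 1 true
  have h4 := hs true
  rw [Fintype.sum_bool, m12_cex, m13_cex, m13_cex] at h1 h2 h3
  rw [Fintype.sum_bool] at h4
  norm_num [Fin.ext_iff] at h1 h2 h3
  linarith [hn true false]

lemma mi_eq : MI1 qq = MI1 cex := by
  show MI (m12 qq) = MI (m12 cex)
  simp only [MI, m1, m2]
  rw [Fin.sum_univ_three, Fin.sum_univ_three]
  simp only [Fintype.sum_bool, Fin.sum_univ_three, m12_qq, m12_cex]
  norm_num [Fin.ext_iff]
  ring_nf

/-- Corollary: there is no nonnegative bivariate information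
decomposition in which UI satisfies the Blackwell property and SI satisfies
left monotonicity. -/
theorem no_blackwell_and_left_monotonic :
    ¬ ∃ D : ∀ (X₁ X₂ : Type) [Fintype X₁] [Fintype X₂], BID X₁ X₂,
      (∀ (X₁ X₂ : Type) [Fintype X₁] [Fintype X₂] (T : Type) [Fintype T]
        (p : T → X₁ → X₂ → ℝ), IsPMF3 p →
          ((D X₁ X₂).UI1 T p = 0 ↔ Garbling (m12 p) (m13 p)))
      ∧ (∀ (X₁ X₂ : Type) [Fintype X₁] [Fintype X₂] (T T' : Type) [Fintype T]
        [Fintype T'] (f : T → T') (p : T → X₁ → X₂ → ℝ), IsPMF3 p →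
          (D X₁ X₂).SI T' (pushS3 f p) ≤ (D X₁ X₂).SI T p) := by
  rintro ⟨D, hB, hM⟩
  have hp := cex_pmf
  have hq := qq_pmf
  have h1 : (D Bool Bool).UI1 (Fin 3) qq = 0 := (hB Bool Bool (Fin 3) qq hq).mpr garb_q
  have h2 : (D Bool Bool).UI1 (Fin 3) cex ≠ 0 := fun h =>
    not_garb ((hB Bool Bool (Fin 3) cex hp).mp h)
  have h3 := (D Bool Bool).UI1_nonneg (Fin 3) cex hp
  have e1 := (D Bool Bool).eq_one (Fin 3) cex hp
  have e2 := (D Bool Bool).eq_one (Fin 3) qq hq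
  have hm : (D Bool Bool).SI (Fin 3) qq ≤ (D Bool Bool).SI (Fin 3) cex :=
    hM Bool Bool (Fin 3) (Fin 3) fstar cex hp
  have hpos : 0 < (D Bool Bool).UI1 (Fin 3) cex := lt_of_le_of_ne h3 (Ne.symm h2)
  have := mi_eq
  linarith

end
end Paper
end

section
/- (Proposition 1) Suppose SI, UI, CI form a bivariate information decomposition (satisfying the three decomposition equations) in which both SI and UI are left monotonic in the target argument. Then for any finite random variables X₁, X₂ and any function f, SI(f(X₁,X₂); X₁, X₂) ≤ I(X₁;X₂). -/
/- Common definitions: finite joint distributions, mutual information (in nats),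
   conditional mutual information, pushforwards, information decompositions. -/

open Finset
open scoped Classical

namespace Paper

noncomputable section

variable {S T T' X X₁ X₂ Z A B : Type*}

section MyAux

variable {Y₁ Y₂ : Type} [Fintype Y₁] [Fintype Y₂]

lemma my_key (a m : ℝ) (ha : 0 ≤ a) (ham : a ≤ m) :
    a * Real.log (a / (a * m)) = -(a * Real.log m) := by
  rcases ha.eq_or_lt with h | h
  · simp [← h]
  · have hm : 0 < m := h.trans_le ham
    rw [show a / (a * m) = m⁻¹ by field_simp, Real.log_inv]
    ring

/-- the joint of (X₁, X₁, X₂) -/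
def diag1 (q : Y₁ → Y₂ → ℝ) : Y₁ → Y₁ → Y₂ → ℝ :=
  fun t x₁ x₂ => if x₁ = t then q x₁ x₂ else 0

lemma pushS3_fst_copy (q : Y₁ → Y₂ → ℝ) :
    pushS3 Prod.fst (copyTriple q) = diag1 q := by
  funext t x₁ x₂
  simp only [pushS3, copyTriple, diag1]
  rw [Fintype.sum_prod_type]
  rw [Finset.sum_eq_single x₁]
  · rw [Finset.sum_eq_single x₂]
    · by_cases h : x₁ = t <;> simp [h]
    · intro b _ hb; simp [Prod.ext_iff]; tauto
    · simp
  · intro a _ ha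
    apply Finset.sum_eq_zero
    intro b _
    simp [Prod.ext_iff]; tauto
  · simp

lemma isPMF3_copyTriple (q : Y₁ → Y₂ → ℝ) (hq : IsPMF q) : IsPMF3 (copyTriple q) := by
  constructor
  · intro s x₁ x₂
    unfold copyTriple
    split
    · exact hq.1 _ _
    · exact le_refl 0
  · have h : ∀ s : Y₁ × Y₂, ∑ x₁, ∑ x₂, copyTriple q s x₁ x₂ = q s.1 s.2 := by
      intro s
      unfold copyTriple
      rw [Finset.sum_eq_single s.1]
      · rw [Finset.sum_eq_single s.2]
        · simp
        · intro b _ hb; simp [Prod.ext_iff]; tauto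
        · simp
      · intro a _ ha
        apply Finset.sum_eq_zero
        intro b _
        simp [Prod.ext_iff, Ne.symm ha]
      · simp
    rw [Finset.sum_congr rfl (fun s _ => h s), Fintype.sum_prod_type]
    exact hq.2

lemma isPMF3_pushS3_s14 {T T'' : Type} [Fintype T] [Fintype T''] (g : T → T'')
    (p : T → Y₁ → Y₂ → ℝ) (hp : IsPMF3 p) : IsPMF3 (pushS3 g p) := by
  constructor
  · intro t x₁ x₂
    apply Finset.sum_nonneg
    intro s _
    split
    · exact hp.1 _ _ _
    · exact le_refl 0
  · unfold pushS3
    rw [Finset.sum_comm]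
    rw [Finset.sum_congr rfl (fun x₁ _ => Finset.sum_comm)]
    rw [Finset.sum_congr rfl (fun x₁ _ => Finset.sum_congr rfl
      (fun x₂ _ => Finset.sum_comm))]
    have h : ∀ (x₁ : Y₁) (x₂ : Y₂) (s : T),
        (∑ t, if g s = t then p s x₁ x₂ else 0) = p s x₁ x₂ := by
      intro x₁ x₂ s; simp
    rw [Finset.sum_congr rfl (fun x₁ _ => Finset.sum_congr rfl
      (fun x₂ _ => Finset.sum_congr rfl (fun s _ => h x₁ x₂ s)))]
    rw [Finset.sum_comm]
    rw [Finset.sum_congr rfl (fun s _ => Finset.sum_comm)]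
    rw [Finset.sum_comm]
    rw [Finset.sum_congr rfl (fun s _ => Finset.sum_comm)]
    exact hp.2

lemma MI1_copyTriple (q : Y₁ → Y₂ → ℝ) (hq0 : ∀ x₁ x₂, 0 ≤ q x₁ x₂) :
    MI1 (copyTriple q) = -∑ t, m1 q t * Real.log (m1 q t) := by
  have hm12 : ∀ (s : Y₁ × Y₂) (x₁ : Y₁),
      m12 (copyTriple q) s x₁ = if x₁ = s.1 then q s.1 s.2 else 0 := by
    intro s x₁; rcases s with ⟨s1, s2⟩
    simp [m12, copyTriple, Prod.ext_iff, ite_and, eq_comm]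
    split <;> simp_all
  have hm1 : ∀ s : Y₁ × Y₂, m1 (m12 (copyTriple q)) s = q s.1 s.2 := by
    intro s; unfold m1
    rw [Finset.sum_congr rfl (fun x₁ _ => hm12 s x₁)]
    simp
  have hm2 : ∀ x₁ : Y₁, m2 (m12 (copyTriple q)) x₁ = m1 q x₁ := by
    intro x₁; unfold m2
    rw [Finset.sum_congr rfl (fun s _ => hm12 s x₁), Fintype.sum_prod_type]
    have h : ∀ a : Y₁, (∑ b, if x₁ = a then q a b else 0)
        = if x₁ = a then m1 q a else 0 := by
      intro a; by_cases h : x₁ = a <;> simp [h, m1]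
    rw [Finset.sum_congr rfl (fun a _ => h a)]
    simp
  have hterm : ∀ (s : Y₁ × Y₂) (x₁ : Y₁),
      m12 (copyTriple q) s x₁ * Real.log (m12 (copyTriple q) s x₁ /
        (m1 (m12 (copyTriple q)) s * m2 (m12 (copyTriple q)) x₁)) =
      if x₁ = s.1 then -(q s.1 s.2 * Real.log (m1 q s.1)) else 0 := by
    intro s x₁
    rw [hm12, hm1, hm2]
    by_cases h : x₁ = s.1
    · rw [if_pos h, if_pos h, h]
      exact my_key _ _ (hq0 _ _)
        (Finset.single_le_sum (fun b _ => hq0 s.1 b) (Finset.mem_univ s.2))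
    · rw [if_neg h, if_neg h]; simp
  unfold MI1 MI
  rw [Finset.sum_congr rfl (fun s (_ : s ∈ Finset.univ) =>
    Finset.sum_congr rfl (fun x₁ _ => hterm s x₁))]
  have h2 : ∀ s : Y₁ × Y₂,
      (∑ x₁, if x₁ = s.1 then -(q s.1 s.2 * Real.log (m1 q s.1)) else 0)
      = -(q s.1 s.2 * Real.log (m1 q s.1)) := by
    intro s; simp
  rw [Finset.sum_congr rfl (fun s _ => h2 s), Fintype.sum_prod_type, ← Finset.sum_neg_distrib]
  refine Finset.sum_congr rfl fun t _ => ?_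
  rw [show m1 q t = ∑ b, q t b from rfl, Finset.sum_mul]
  simp [m1]

lemma MI1_diag1 (q : Y₁ → Y₂ → ℝ) (hq0 : ∀ x₁ x₂, 0 ≤ q x₁ x₂) :
    MI1 (diag1 q) = -∑ t, m1 q t * Real.log (m1 q t) := by
  have hm12 : ∀ t x₁ : Y₁, m12 (diag1 q) t x₁ = if x₁ = t then m1 q x₁ else 0 := by
    intro t x₁; by_cases h : x₁ = t <;> simp [m12, diag1, m1, h]
  have hm1 : ∀ t : Y₁, m1 (m12 (diag1 q)) t = m1 q t := by
    intro t; unfold m1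
    rw [Finset.sum_congr rfl (fun x₁ _ => hm12 t x₁)]
    simp [m1]
  have hm2 : ∀ x₁ : Y₁, m2 (m12 (diag1 q)) x₁ = m1 q x₁ := by
    intro x₁; unfold m2
    rw [Finset.sum_congr rfl (fun t _ => hm12 t x₁)]
    simp
  have hq1 : ∀ t : Y₁, 0 ≤ m1 q t := by
    intro t; exact Finset.sum_nonneg fun b _ => hq0 t b
  have hterm : ∀ t x₁ : Y₁,
      m12 (diag1 q) t x₁ * Real.log (m12 (diag1 q) t x₁ /
        (m1 (m12 (diag1 q)) t * m2 (m12 (diag1 q)) x₁)) =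
      if x₁ = t then -(m1 q t * Real.log (m1 q t)) else 0 := by
    intro t x₁
    rw [hm12, hm1, hm2]
    by_cases h : x₁ = t
    · rw [if_pos h, if_pos h, h]
      exact my_key _ _ (hq1 t) (le_refl _)
    · rw [if_neg h, if_neg h]; simp
  unfold MI1 MI
  rw [Finset.sum_congr rfl (fun t (_ : t ∈ Finset.univ) =>
    Finset.sum_congr rfl (fun x₁ _ => hterm t x₁))]
  simp

lemma MI2_diag1 (q : Y₁ → Y₂ → ℝ) : MI2 (diag1 q) = MI q := by
  have h : m13 (diag1 q) = q := by
    funext t x₂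
    simp [m13, diag1]
  unfold MI2
  rw [h]

end MyAux

/-- Proposition 1: if both SI and UI of a bivariate information
decomposition are left monotonic in the target argument, then
SI(f(X₁,X₂);X₁,X₂) ≤ I(X₁;X₂) for every function f. -/
theorem left_monotonic_decomposition_bound {X₁ X₂ T' : Type}
    [Fintype X₁] [Fintype X₂] [Fintype T']
    (D : BID X₁ X₂)
    (hSI_lm : ∀ (T T'' : Type) [Fintype T] [Fintype T''] (g : T → T'')
      (p : T → X₁ → X₂ → ℝ), IsPMF3 p → D.SI T'' (pushS3 g p) ≤ D.SI T p)
    (hUI_lm : ∀ (T T'' : Type) [Fintype T] [Fintype T''] (g : T → T'')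
      (p : T → X₁ → X₂ → ℝ), IsPMF3 p → D.UI1 T'' (pushS3 g p) ≤ D.UI1 T p)
    (q : X₁ → X₂ → ℝ) (hq : IsPMF q) (f : X₁ × X₂ → T') :
    D.SI T' (pushS3 f (copyTriple q)) ≤ MI q := by
  set p := copyTriple q with hpdef
  have hp : IsPMF3 p := isPMF3_copyTriple q hq
  have hr : IsPMF3 (diag1 q) := by
    rw [← pushS3_fst_copy q]
    exact isPMF3_pushS3_s14 _ _ hp
  -- step 1: SI(f(S)) ≤ SI(S)
  have h1 : D.SI T' (pushS3 f p) ≤ D.SI (X₁ × X₂) p := hSI_lm _ _ f p hp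
  -- step 2: SI(S) = MI1 p - UI1 p
  have h2 : D.SI (X₁ × X₂) p = MI1 p - D.UI1 (X₁ × X₂) p := by
    have := D.eq_one (X₁ × X₂) p hp; linarith
  -- step 3: UI1 (diag1 q) ≤ UI1 p
  have h3 : D.UI1 X₁ (diag1 q) ≤ D.UI1 (X₁ × X₂) p := by
    rw [← pushS3_fst_copy q]
    exact hUI_lm _ _ Prod.fst p hp
  -- step 4: MI1 p = MI1 (diag1 q)
  have h4 : MI1 p = MI1 (diag1 q) := by
    rw [MI1_copyTriple q hq.1, MI1_diag1 q hq.1]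
  -- step 5: D.SI X₁ (diag1 q) = MI1 (diag1 q) - UI1 (diag1 q)
  have h5 : D.SI X₁ (diag1 q) = MI1 (diag1 q) - D.UI1 X₁ (diag1 q) := by
    have := D.eq_one X₁ (diag1 q) hr; linarith
  -- step 6: D.SI X₁ (diag1 q) ≤ MI2 (diag1 q) = MI q
  have h6 : D.SI X₁ (diag1 q) ≤ MI q := by
    have he := D.eq_two X₁ (diag1 q) hr
    have hn := D.UI2_nonneg X₁ (diag1 q) hr
    rw [MI2_diag1 q] at he
    linarith
  linarith

end
end Paper
end
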